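/- arXiv:1710.00216 — 3 statements merged into one kernel-verified Lean document; each statement's English description precedes it below -/
import Mathlib

section
/- For every k ∈ (0, k₀) the quantity ι₃(k) = (3E(k)² − (5 − 4k²)E(k)K(k) + 2(1 − k²)K(k)²)/(1 − k²) is strictly positive. -/
open Real Set Filter Topology

/-- Complete elliptic integral of the first kind. -/
noncomputable def K (k : ℝ) : ℝ :=
  ∫ t in (0:ℝ)..(π/2), 1 / Real.sqrt (1 - k^2 * Real.sin t ^ 2)

/-- Complete elliptic integral of the second kind. -/
noncomputable def E (k : ℝ) : ℝ :=
  ∫ t in (0:ℝ)..(π/2), Real.sqrt (1 - k^2 * Real.sin t ^ 2)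

noncomputable def ι₃ (k : ℝ) : ℝ :=
  (3 * (E k)^2 - (5 - 4 * k^2) * E k * K k + 2 * (1 - k^2) * (K k)^2) / (1 - k^2)

open intervalIntegral MeasureTheory

set_option maxHeartbeats 2000000


lemma aux_pos (k t : ℝ) (hk : k^2 < 1) : 0 < 1 - k^2 * Real.sin t ^ 2 := by
  nlinarith [Real.sin_sq_le_one t, sq_nonneg k, sq_nonneg (Real.sin t)]

-- pointwise bounds
lemma ptA (u : ℝ) (h0 : 0 ≤ u) (h1 : u < 1) :
    1 + u/2 + 3*u^2/8 + 5*u^3/16 + 35*u^4/128 ≤ 1 / Real.sqrt (1 - u) := by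
  have hs : 0 < Real.sqrt (1 - u) := Real.sqrt_pos.mpr (by linarith)
  have hs2 : Real.sqrt (1 - u) ^ 2 = 1 - u := Real.sq_sqrt (by linarith)
  rw [le_div_iff₀ hs]
  set s := Real.sqrt (1 - u)
  have hA : 0 < 1 + u/2 + 3*u^2/8 + 5*u^3/16 + 35*u^4/128 := by positivity
  have key : ((1 + u/2 + 3*u^2/8 + 5*u^3/16 + 35*u^4/128) * s)^2 ≤ 1 := by
    have : ((1 + u/2 + 3*u^2/8 + 5*u^3/16 + 35*u^4/128) * s)^2
        = (1 + u/2 + 3*u^2/8 + 5*u^3/16 + 35*u^4/128)^2 * (1 - u) := by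
      rw [mul_pow, hs2]
    rw [this]
    nlinarith [sq_nonneg u, pow_le_pow_left₀ h0 h1.le 2, mul_nonneg (mul_nonneg h0 h0) h0,
      mul_nonneg (mul_nonneg (mul_nonneg h0 h0) h0) h0, sq_nonneg (u*(1-u)),
      mul_nonneg (mul_nonneg (mul_nonneg (mul_nonneg h0 h0) h0) h0) h0]
  nlinarith [mul_nonneg hA.le hs.le, key]

lemma ptB (u : ℝ) (h0 : 0 ≤ u) (h1 : u ≤ 1) :
    Real.sqrt (1 - u) ≤ 1 - u/2 - u^2/8 - u^3/16 - 5*u^4/128 := by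
  rw [Real.sqrt_le_iff]
  constructor
  · nlinarith [sq_nonneg u, mul_nonneg (mul_nonneg h0 h0) h0,
      mul_nonneg (mul_nonneg (mul_nonneg h0 h0) h0) h0]
  · nlinarith [sq_nonneg u, mul_nonneg (mul_nonneg h0 h0) h0,
      mul_nonneg (mul_nonneg (mul_nonneg h0 h0) h0) h0,
      mul_nonneg (mul_nonneg (mul_nonneg (mul_nonneg h0 h0) h0) h0) h0,
      sq_nonneg (u^2), sq_nonneg (u^3), sq_nonneg (u^4), mul_nonneg h0 h0]


lemma ptC (u : ℝ) (h0 : 0 ≤ u) (h1 : u ≤ 67/1000) :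
    1 - u/2 - u^2/8 - u^3/14 ≤ Real.sqrt (1 - u) := by
  rw [Real.le_sqrt (by nlinarith) (by linarith)]
  nlinarith [mul_nonneg (mul_nonneg h0 h0) h0, mul_nonneg h0 h0,
    mul_nonneg (mul_nonneg (mul_nonneg h0 h0) h0) h0,
    mul_nonneg (mul_nonneg (mul_nonneg (mul_nonneg h0 h0) h0) h0) h0,
    sq_nonneg (u^3), sq_nonneg (u^2)]

lemma ptD (u : ℝ) (h0 : 0 ≤ u) (h1 : u ≤ 67/1000) :
    1 / Real.sqrt (1 - u) ≤ 1 + u/2 + 3*u^2/8 + 7*u^3/20 := by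
  have hu1 : u < 1 := by linarith
  have hs : 0 < Real.sqrt (1 - u) := Real.sqrt_pos.mpr (by linarith)
  have hs2 : Real.sqrt (1 - u) ^ 2 = 1 - u := Real.sq_sqrt (by linarith)
  rw [div_le_iff₀ hs]
  set s := Real.sqrt (1 - u)
  have key : 1 ≤ ((1 + u/2 + 3*u^2/8 + 7*u^3/20) * s)^2 := by
    have heq : ((1 + u/2 + 3*u^2/8 + 7*u^3/20) * s)^2
        = (1 + u/2 + 3*u^2/8 + 7*u^3/20)^2 * (1 - u) := by rw [mul_pow, hs2]
    rw [heq]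
    nlinarith [mul_nonneg (mul_nonneg h0 h0) h0, mul_nonneg h0 h0,
      mul_nonneg (mul_nonneg (mul_nonneg h0 h0) h0) h0,
      mul_nonneg (mul_nonneg (mul_nonneg (mul_nonneg h0 h0) h0) h0) h0,
      sq_nonneg (u^3), sq_nonneg (u^2)]
  nlinarith [mul_nonneg (by positivity : (0:ℝ) ≤ 1 + u/2 + 3*u^2/8 + 7*u^3/20) hs.le, key]


lemma Isin0 : ∫ t in (0:ℝ)..(π/2), Real.sin t ^ 0 = π/2 := by
  simp

lemma Isin2 : ∫ t in (0:ℝ)..(π/2), Real.sin t ^ 2 = π/4 := by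
  rw [integral_sin_sq]
  simp [Real.cos_pi_div_two]
  ring

lemma Isin4 : ∫ t in (0:ℝ)..(π/2), Real.sin t ^ 4 = 3*π/16 := by
  have := integral_sin_pow (a := 0) (b := π/2) 2
  rw [Isin2] at this
  rw [this]
  simp [Real.cos_pi_div_two]
  ring

lemma Isin6 : ∫ t in (0:ℝ)..(π/2), Real.sin t ^ 6 = 5*π/32 := by
  have := integral_sin_pow (a := 0) (b := π/2) 4
  rw [Isin4] at this
  rw [this]
  simp [Real.cos_pi_div_two]
  ring

lemma Isin8 : ∫ t in (0:ℝ)..(π/2), Real.sin t ^ 8 = 35*π/256 := by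
  have := integral_sin_pow (a := 0) (b := π/2) 6
  rw [Isin6] at this
  rw [this]
  simp [Real.cos_pi_div_two]
  ring

lemma intg_sinpow (n : ℕ) : IntervalIntegrable (fun t => Real.sin t ^ n) volume 0 (π/2) :=
  (Real.continuous_sin.pow n).intervalIntegrable _ _

lemma poly_int (c1 c2 c3 c4 : ℝ) :
    ∫ t in (0:ℝ)..(π/2), (1 + c1 * Real.sin t ^ 2 + c2 * Real.sin t ^ 4
      + c3 * Real.sin t ^ 6 + c4 * Real.sin t ^ 8)
    = π/2 + c1 * (π/4) + c2 * (3*π/16) + c3 * (5*π/32) + c4 * (35*π/256) := by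
  have h1 : IntervalIntegrable (fun t : ℝ => (1:ℝ)) volume 0 (π/2) :=
    intervalIntegrable_const
  have h2 := (intg_sinpow 2).const_mul c1
  have h4 := (intg_sinpow 4).const_mul c2
  have h6 := (intg_sinpow 6).const_mul c3
  have h8 := (intg_sinpow 8).const_mul c4
  rw [integral_add (((h1.add h2).add h4).add h6) h8,
      integral_add ((h1.add h2).add h4) h6,
      integral_add (h1.add h2) h4,
      integral_add h1 h2,
      intervalIntegral.integral_const_mul, intervalIntegral.integral_const_mul, intervalIntegral.integral_const_mul, intervalIntegral.integral_const_mul,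
      Isin2, Isin4, Isin6, Isin8]
  simp only [integral_one]
  ring

lemma contE (k : ℝ) : Continuous (fun t => Real.sqrt (1 - k^2 * Real.sin t ^ 2)) :=
  Real.continuous_sqrt.comp (by continuity)

lemma contK (k : ℝ) (hk : k^2 < 1) :
    Continuous (fun t => 1 / Real.sqrt (1 - k^2 * Real.sin t ^ 2)) := by
  apply Continuous.div continuous_const (contE k)
  intro t
  exact Real.sqrt_ne_zero'.mpr (aux_pos k t hk)

lemma polyc (c1 c2 c3 c4 : ℝ) : Continuous (fun t : ℝ => 1 + c1 * Real.sin t ^ 2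
    + c2 * Real.sin t ^ 4 + c3 * Real.sin t ^ 6 + c4 * Real.sin t ^ 8) := by
  continuity

lemma usq (k t : ℝ) : 0 ≤ k^2 * Real.sin t ^ 2 := by positivity
lemma usq_le (k t : ℝ) : k^2 * Real.sin t ^ 2 ≤ k^2 := by
  nlinarith [Real.sin_sq_le_one t, sq_nonneg k, sq_nonneg (Real.sin t)]

lemma K_ge (k : ℝ) (hk : k^2 < 1) :
    π/2 * (1 + k^2/4 + 9*k^4/64 + 25*k^6/256 + 1225*k^8/16384) ≤ K k := by
  have mono := integral_mono_on (a := 0) (b := π/2) (μ := volume)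
    (by positivity)
    ((polyc (k^2/2) (3*k^4/8) (5*k^6/16) (35*k^8/128)).intervalIntegrable _ _)
    ((contK k hk).intervalIntegrable _ _)
    (fun t _ => by
      have h := ptA (k^2 * Real.sin t ^ 2) (usq k t) (lt_of_le_of_lt (usq_le k t) hk)
      have e : (1:ℝ) + k^2/2 * Real.sin t ^ 2 + 3*k^4/8 * Real.sin t ^ 4
          + 5*k^6/16 * Real.sin t ^ 6 + 35*k^8/128 * Real.sin t ^ 8
          = 1 + (k^2 * Real.sin t ^ 2)/2 + 3*(k^2 * Real.sin t ^ 2)^2/8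
          + 5*(k^2 * Real.sin t ^ 2)^3/16 + 35*(k^2 * Real.sin t ^ 2)^4/128 := by ring
      rw [e]; exact h)
  rw [poly_int] at mono
  calc π/2 * (1 + k^2/4 + 9*k^4/64 + 25*k^6/256 + 1225*k^8/16384)
      = π/2 + k^2/2 * (π/4) + 3*k^4/8 * (3*π/16) + 5*k^6/16 * (5*π/32)
        + 35*k^8/128 * (35*π/256) := by ring
    _ ≤ K k := mono

lemma E_le (k : ℝ) (hk : k^2 ≤ 1) :
    E k ≤ π/2 * (1 - k^2/4 - 3*k^4/64 - 5*k^6/256 - 175*k^8/16384) := by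
  have mono := integral_mono_on (a := 0) (b := π/2) (μ := volume)
    (by positivity)
    ((contE k).intervalIntegrable _ _)
    ((polyc (-(k^2/2)) (-(k^4/8)) (-(k^6/16)) (-(5*k^8/128))).intervalIntegrable _ _)
    (fun t _ => by
      have h := ptB (k^2 * Real.sin t ^ 2) (usq k t) (le_trans (usq_le k t) hk)
      have e : (1:ℝ) + -(k^2/2) * Real.sin t ^ 2 + -(k^4/8) * Real.sin t ^ 4
          + -(k^6/16) * Real.sin t ^ 6 + -(5*k^8/128) * Real.sin t ^ 8
          = 1 - (k^2 * Real.sin t ^ 2)/2 - (k^2 * Real.sin t ^ 2)^2/8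
          - (k^2 * Real.sin t ^ 2)^3/16 - 5*(k^2 * Real.sin t ^ 2)^4/128 := by ring
      rw [e]; exact h)
  rw [poly_int] at mono
  calc E k ≤ π/2 + -(k^2/2) * (π/4) + -(k^4/8) * (3*π/16) + -(k^6/16) * (5*π/32)
        + -(5*k^8/128) * (35*π/256) := mono
    _ = π/2 * (1 - k^2/4 - 3*k^4/64 - 5*k^6/256 - 175*k^8/16384) := by ring

lemma E_ge (k : ℝ) (hk : k^2 ≤ 67/1000) :
    π/2 * (1 - k^2/4 - 3*k^4/64 - 5*k^6/224) ≤ E k := by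
  have mono := integral_mono_on (a := 0) (b := π/2) (μ := volume)
    (by positivity)
    ((polyc (-(k^2/2)) (-(k^4/8)) (-(k^6/14)) 0).intervalIntegrable _ _)
    ((contE k).intervalIntegrable _ _)
    (fun t _ => by
      have h := ptC (k^2 * Real.sin t ^ 2) (usq k t) (le_trans (usq_le k t) hk)
      have e : (1:ℝ) + -(k^2/2) * Real.sin t ^ 2 + -(k^4/8) * Real.sin t ^ 4
          + -(k^6/14) * Real.sin t ^ 6 + 0 * Real.sin t ^ 8
          = 1 - (k^2 * Real.sin t ^ 2)/2 - (k^2 * Real.sin t ^ 2)^2/8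
          - (k^2 * Real.sin t ^ 2)^3/14 := by ring
      rw [e]; exact h)
  rw [poly_int] at mono
  calc π/2 * (1 - k^2/4 - 3*k^4/64 - 5*k^6/224)
      = π/2 + -(k^2/2) * (π/4) + -(k^4/8) * (3*π/16) + -(k^6/14) * (5*π/32)
        + 0 * (35*π/256) := by ring
    _ ≤ E k := mono

lemma K_le (k : ℝ) (hk : k^2 ≤ 67/1000) :
    K k ≤ π/2 * (1 + k^2/4 + 9*k^4/64 + 7*k^6/64) := by
  have hk1 : k^2 < 1 := by linarith
  have mono := integral_mono_on (a := 0) (b := π/2) (μ := volume)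
    (by positivity)
    ((contK k hk1).intervalIntegrable _ _)
    ((polyc (k^2/2) (3*k^4/8) (7*k^6/20) 0).intervalIntegrable _ _)
    (fun t _ => by
      have h := ptD (k^2 * Real.sin t ^ 2) (usq k t) (le_trans (usq_le k t) hk)
      have e : (1:ℝ) + k^2/2 * Real.sin t ^ 2 + 3*k^4/8 * Real.sin t ^ 4
          + 7*k^6/20 * Real.sin t ^ 6 + 0 * Real.sin t ^ 8
          = 1 + (k^2 * Real.sin t ^ 2)/2 + 3*(k^2 * Real.sin t ^ 2)^2/8
          + 7*(k^2 * Real.sin t ^ 2)^3/20 := by ring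
      rw [e]; exact h)
  rw [poly_int] at mono
  calc K k ≤ π/2 + k^2/2 * (π/4) + 3*k^4/8 * (3*π/16) + 7*k^6/20 * (5*π/32)
        + 0 * (35*π/256) := mono
    _ = π/2 * (1 + k^2/4 + 9*k^4/64 + 7*k^6/64) := by ring

/-- For every `k ∈ (0, k₀)` the quantity `ι₃(k)` is strictly positive, where `k₀` is
the unique root in `(0,1)` of `2E(k) − K(k) = 0`. -/
theorem iota₃_pos (k₀ : ℝ) (hk₀ : k₀ ∈ Set.Ioo (0:ℝ) 1)
    (hroot : 2 * E k₀ - K k₀ = 0) :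
    ∀ k ∈ Set.Ioo 0 k₀, 0 < ι₃ k := by
  obtain ⟨hk00, hk01⟩ := hk₀
  intro k hk
  obtain ⟨hkpos, hkk0⟩ := hk
  have hk1 : k < 1 := hkk0.trans hk01
  have hy1 : k^2 < 1 := by nlinarith
  have h1k : 0 < 1 - k^2 := by linarith
  have hπ := Real.pi_pos
  have hN : 0 < 3 * (E k)^2 - (5 - 4 * k^2) * E k * K k + 2 * (1 - k^2) * (K k)^2 := by
    rcases le_or_gt (k^2) (67/1000) with hsm | hlg
    · -- small k
      have hy0 : 0 < k^2 := by positivity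
      have h4 : k^4 ≤ (67/1000:ℝ)^2 := by nlinarith [sq_nonneg k]
      have h6 : k^6 ≤ (67/1000:ℝ)^3 := by nlinarith [sq_nonneg k, pow_nonneg (sq_nonneg k) 2]
      have h8 : k^8 ≤ (67/1000:ℝ)^4 := by nlinarith [pow_nonneg (sq_nonneg k) 2]
      have h10 : k^10 ≤ (67/1000:ℝ)^5 := by nlinarith [h8, sq_nonneg k, pow_nonneg (sq_nonneg k) 4]
      have h12 : k^12 ≤ (67/1000:ℝ)^6 := by nlinarith [h8, h4, pow_nonneg (sq_nonneg k) 4, pow_nonneg (sq_nonneg k) 2]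
      have h14 : k^14 ≤ (67/1000:ℝ)^7 := by nlinarith [h8, h6, pow_nonneg (sq_nonneg k) 4, pow_nonneg (sq_nonneg k) 3]
      have h16 : k^16 ≤ (67/1000:ℝ)^8 := by nlinarith [h8, pow_nonneg (sq_nonneg k) 4]
      have hEg := E_ge k hsm
      have hEl := E_le k hy1.le
      have hKg := K_ge k hy1
      have hKl := K_le k hsm
      have hEL0 : (0:ℝ) ≤ 1 - k^2/4 - 3*k^4/64 - 5*k^6/224 := by linarith
      have hKL0 : (0:ℝ) ≤ 1 + k^2/4 + 9*k^4/64 + 25*k^6/256 + 1225*k^8/16384 := by positivity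
      have hE0 : 0 ≤ E k := le_trans (mul_nonneg (by positivity) hEL0) hEg
      have hK0 : 0 ≤ K k := le_trans (mul_nonneg (by positivity) hKL0) hKg
      have hEU0 : 0 ≤ π/2 * (1 - k^2/4 - 3*k^4/64 - 5*k^6/256 - 175*k^8/16384) := hE0.trans hEl
      have hEK : E k * K k ≤ (π/2 * (1 - k^2/4 - 3*k^4/64 - 5*k^6/256 - 175*k^8/16384))
          * (π/2 * (1 + k^2/4 + 9*k^4/64 + 7*k^6/64)) := mul_le_mul hEl hKl hK0 hEU0
      have hE2 : (π/2 * (1 - k^2/4 - 3*k^4/64 - 5*k^6/224))^2 ≤ (E k)^2 :=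
        pow_le_pow_left₀ (mul_nonneg (by positivity) hEL0) hEg 2
      have hK2 : (π/2 * (1 + k^2/4 + 9*k^4/64 + 25*k^6/256 + 1225*k^8/16384))^2 ≤ (K k)^2 :=
        pow_le_pow_left₀ (mul_nonneg (by positivity) hKL0) hKg 2
      have h5 : (0:ℝ) < 5 - 4*k^2 := by nlinarith
      have hR : (0:ℝ) < 3/2 - 9/16*k^2 - 555/1792*k^4 + 41801/114688*k^6
          - 204411/458752*k^8 - 4678601/51380224*k^10 - 21305/524288*k^12
          - 3046575/134217728*k^14 - 1500625/134217728*k^16 := by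
        have h6' : (0:ℝ) ≤ k^6 := by positivity
        linarith
      have hkey : 0 < 3*(π/2 * (1 - k^2/4 - 3*k^4/64 - 5*k^6/224))^2
          - (5 - 4*k^2) * ((π/2 * (1 - k^2/4 - 3*k^4/64 - 5*k^6/256 - 175*k^8/16384))
            * (π/2 * (1 + k^2/4 + 9*k^4/64 + 7*k^6/64)))
          + 2*(1 - k^2)*(π/2 * (1 + k^2/4 + 9*k^4/64 + 25*k^6/256 + 1225*k^8/16384))^2 := by
        have expand : 3*(π/2 * (1 - k^2/4 - 3*k^4/64 - 5*k^6/224))^2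
          - (5 - 4*k^2) * ((π/2 * (1 - k^2/4 - 3*k^4/64 - 5*k^6/256 - 175*k^8/16384))
            * (π/2 * (1 + k^2/4 + 9*k^4/64 + 7*k^6/64)))
          + 2*(1 - k^2)*(π/2 * (1 + k^2/4 + 9*k^4/64 + 25*k^6/256 + 1225*k^8/16384))^2
          = (π/2)^2 * (k^2 * (3/2 - 9/16*k^2 - 555/1792*k^4 + 41801/114688*k^6
          - 204411/458752*k^8 - 4678601/51380224*k^10 - 21305/524288*k^12
          - 3046575/134217728*k^14 - 1500625/134217728*k^16)) := by ring
        rw [expand]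
        exact mul_pos (by positivity) (mul_pos hy0 hR)
      have t1 : 0 ≤ (5 - 4*k^2) * ((π/2 * (1 - k^2/4 - 3*k^4/64 - 5*k^6/256 - 175*k^8/16384))
          * (π/2 * (1 + k^2/4 + 9*k^4/64 + 7*k^6/64)) - E k * K k) :=
        mul_nonneg h5.le (by linarith)
      have t2 : 0 ≤ (1 - k^2) * ((K k)^2
          - (π/2 * (1 + k^2/4 + 9*k^4/64 + 25*k^6/256 + 1225*k^8/16384))^2) :=
        mul_nonneg h1k.le (by linarith)
      nlinarith [hkey, hE2, t1, t2]
    · rcases le_or_gt (k^2) (933/1000) with hmid | hbig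
      · -- middle k : discriminant negative
        have hK0 : 0 < K k := lt_of_lt_of_le (by positivity) (K_ge k hy1)
        have hdisc : 16*k^4 - 16*k^2 + 1 < 0 := by
          nlinarith [mul_nonneg (by linarith : (0:ℝ) ≤ k^2 - 67/1000)
            (by linarith : (0:ℝ) ≤ 933/1000 - k^2)]
        nlinarith [sq_nonneg (6*E k - (5 - 4*k^2)*K k), mul_pos hK0 hK0, hdisc]
      · -- large k : contradiction with 2E(k₀)=K(k₀)
        exfalso
        have hk02 : (933/1000:ℝ) < k₀^2 := by nlinarith
        have hk01' : k₀^2 < 1 := by nlinarith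
        have hKg := K_ge k₀ hk01'
        have hEl := E_le k₀ hk01'.le
        have p2 : (933/1000:ℝ)^2 < k₀^4 := by nlinarith
        have p3 : (933/1000:ℝ)^3 < k₀^6 := by nlinarith [p2, hk02]
        have p4 : (933/1000:ℝ)^4 < k₀^8 := by nlinarith [p2]
        have hg : 2*(1 - k₀^2/4 - 3*k₀^4/64 - 5*k₀^6/256 - 175*k₀^8/16384)
            - (1 + k₀^2/4 + 9*k₀^4/64 + 25*k₀^6/256 + 1225*k₀^8/16384) < 0 := by
          linarith
        nlinarith [hroot, hKg, hEl, hg, hπ]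
  show 0 < ι₃ k
  unfold ι₃
  exact div_pos hN h1k
end

section
/- For every k ∈ (0, k₀): (a) the function k ↦ √(2ι₁(k)/k) is differentiable at k with derivative −E(k)/((1 − k²)·√(2k³ι₁(k))); (b) the function k ↦ (ι₂(k) + 4k²ι₁(k))/(3(2kι₁(k))^{3/2}) is differentiable at k with derivative ι₃(k)/(2kι₁(k))^{5/2}, where ι₃(k) = (3E(k)² − (5 − 4k²)E(k)K(k) + 2(1 − k²)K(k)²)/(1 − k²). -/
open Real Set Filter Topology

noncomputable def ι₁ (k : ℝ) : ℝ := 2 * E k - K k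

noncomputable def ι₂ (k : ℝ) : ℝ := K k - E k

section Aux

lemma u_pos {x : ℝ} (hx : |x| < 1) (t : ℝ) : 0 < 1 - x^2 * Real.sin t ^ 2 := by
  nlinarith [Real.sin_sq_le_one t, abs_nonneg x, sq_abs x, sq_nonneg (Real.sin t), sq_nonneg x]

lemma ball_abs {k x : ℝ} (hk : k ∈ Ioo (0:ℝ) 1) (hx : x ∈ Metric.ball k ((1-k)/2)) :
    |x| < (1+k)/2 := by
  obtain ⟨hk0, hk1⟩ := hk
  rw [Metric.mem_ball, Real.dist_eq] at hx
  rw [abs_lt] at hx ⊢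
  constructor <;> nlinarith

lemma cont_sqrtu (x : ℝ) : Continuous (fun t => Real.sqrt (1 - x^2 * Real.sin t ^ 2)) := by
  exact Real.continuous_sqrt.comp (by continuity)

lemma cont_inv_sqrtu {x : ℝ} (hx : |x| < 1) :
    Continuous (fun t => 1 / Real.sqrt (1 - x^2 * Real.sin t ^ 2)) :=
  continuous_const.div (cont_sqrtu x) fun t => (Real.sqrt_pos.2 (u_pos hx t)).ne'

lemma cont_inv_sqrtu3 {x : ℝ} (hx : |x| < 1) :
    Continuous (fun t => 1 / Real.sqrt (1 - x^2 * Real.sin t ^ 2) ^ 3) :=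
  continuous_const.div ((cont_sqrtu x).pow 3)
    fun t => pow_ne_zero 3 (Real.sqrt_pos.2 (u_pos hx t)).ne'

lemma hasDerivAt_inner (x t : ℝ) :
    HasDerivAt (fun x : ℝ => 1 - x^2 * Real.sin t ^ 2) (-(2*x*Real.sin t ^ 2)) x := by
  have h := ((hasDerivAt_pow 2 x).mul_const (Real.sin t ^ 2)).const_sub 1
  refine h.congr_deriv ?_; ring

lemma hasDerivAt_invsqrt {x t : ℝ} (hu : 0 < 1 - x^2 * Real.sin t ^ 2) :
    HasDerivAt (fun x : ℝ => 1 / Real.sqrt (1 - x^2 * Real.sin t ^ 2))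
      (2*x*Real.sin t ^ 2 / (2 * Real.sqrt (1 - x^2 * Real.sin t ^ 2) ^ 3)) x := by
  have hs : Real.sqrt (1 - x^2 * Real.sin t ^ 2) ≠ 0 := (Real.sqrt_pos.2 hu).ne'
  have hq : Real.sqrt (1 - x^2 * Real.sin t ^ 2) ^ 2 = 1 - x^2 * Real.sin t ^ 2 :=
    Real.sq_sqrt hu.le
  have h := (hasDerivAt_const x (1:ℝ)).div ((hasDerivAt_inner x t).sqrt hu.ne') hs
  have h3 : Real.sqrt (1 - x^2 * Real.sin t ^ 2) ^ 3
      = (1 - x^2 * Real.sin t ^ 2) * Real.sqrt (1 - x^2 * Real.sin t ^ 2) := by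
    rw [pow_succ, hq]
  refine h.congr_deriv (Eq.symm ?_)
  rw [h3]
  field_simp
  rw [hq]; ring

lemma hasDerivAt_E_raw {k : ℝ} (hk : k ∈ Ioo (0:ℝ) 1) :
    HasDerivAt E (∫ t in (0:ℝ)..(π/2),
      -(2*k*Real.sin t ^ 2) / (2 * Real.sqrt (1 - k^2 * Real.sin t ^ 2))) k := by
  obtain ⟨hk0, hk1⟩ := hk
  set ε := (1-k)/2 with hε
  have hε_pos : 0 < ε := by simp [hε]; linarith
  set c : ℝ := 1 - ((1+k)/2)^2 with hc
  have hc_pos : 0 < c := by simp only [hc]; nlinarith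
  have hball : ∀ x ∈ Metric.ball k ε, ∀ t : ℝ, c ≤ 1 - x^2 * Real.sin t ^ 2 := by
    intro x hx t
    have h := ball_abs ⟨hk0, hk1⟩ hx
    simp only [hc]
    nlinarith [Real.sin_sq_le_one t, sq_abs x, sq_nonneg (Real.sin t), abs_nonneg x,
      mul_self_lt_mul_self (abs_nonneg x) h, sq_nonneg x,
      mul_le_mul_of_nonneg_left (Real.sin_sq_le_one t) (sq_nonneg x)]
  have key := intervalIntegral.hasDerivAt_integral_of_dominated_loc_of_deriv_le
    (F := fun x t => Real.sqrt (1 - x^2 * Real.sin t ^ 2))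
    (F' := fun x t => -(2*x*Real.sin t ^ 2) / (2 * Real.sqrt (1 - x^2 * Real.sin t ^ 2)))
    (x₀ := k) (a := 0) (b := π/2) (bound := fun _ => 2 / (2 * Real.sqrt c))
    (μ := MeasureTheory.volume)
    (Metric.ball_mem_nhds k hε_pos)
    (Filter.Eventually.of_forall fun x => ((cont_sqrtu x).aestronglyMeasurable))
    ((cont_sqrtu k).intervalIntegrable 0 (π/2))
    (by
      refine Continuous.aestronglyMeasurable ?_
      refine Continuous.div (by continuity) ?_ (fun t => ?_)
      · exact continuous_const.mul (cont_sqrtu k)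
      · have := u_pos (by rw [abs_of_pos hk0]; exact hk1) t
        positivity)
    (Filter.Eventually.of_forall fun t _ x hx => by
      have hu := lt_of_lt_of_le hc_pos (hball x hx t)
      simp only [Real.norm_eq_abs]
      rw [abs_div, abs_of_pos (by positivity : (0:ℝ) < 2 * Real.sqrt (1 - x^2 * Real.sin t ^ 2))]
      apply div_le_div₀ (by norm_num)
      · rw [abs_neg, abs_mul, abs_mul]
        have h1 : |Real.sin t ^ 2| ≤ 1 := by
          rw [abs_of_nonneg (sq_nonneg _)]; exact Real.sin_sq_le_one t
        have h2 : |x| ≤ 1 := le_of_lt (lt_of_lt_of_le (ball_abs ⟨hk0, hk1⟩ hx) (by linarith))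
        calc |2| * |x| * |Real.sin t ^ 2| ≤ 2 * 1 * 1 := by
              apply mul_le_mul _ h1 (abs_nonneg _) (by norm_num)
              apply mul_le_mul (le_of_eq (abs_of_pos (by norm_num))) h2 (abs_nonneg _)
                (by norm_num)
          _ = 2 := by norm_num
      · positivity
      · have := Real.sqrt_le_sqrt (hball x hx t)
        linarith)
    (intervalIntegrable_const)
    (Filter.Eventually.of_forall fun t _ x hx => by
      have hu := lt_of_lt_of_le hc_pos (hball x hx t)
      exact (hasDerivAt_inner x t).sqrt (ne_of_gt hu))
  exact key.2

lemma hasDerivAt_K_raw {k : ℝ} (hk : k ∈ Ioo (0:ℝ) 1) :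
    HasDerivAt K (∫ t in (0:ℝ)..(π/2),
      2*k*Real.sin t ^ 2 / (2 * Real.sqrt (1 - k^2 * Real.sin t ^ 2) ^ 3)) k := by
  obtain ⟨hk0, hk1⟩ := hk
  set ε := (1-k)/2 with hε
  have hε_pos : 0 < ε := by simp [hε]; linarith
  set c : ℝ := 1 - ((1+k)/2)^2 with hc
  have hc_pos : 0 < c := by simp only [hc]; nlinarith
  have hball : ∀ x ∈ Metric.ball k ε, ∀ t : ℝ, c ≤ 1 - x^2 * Real.sin t ^ 2 := by
    intro x hx t
    have h := ball_abs ⟨hk0, hk1⟩ hx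
    simp only [hc]
    nlinarith [Real.sin_sq_le_one t, sq_abs x, sq_nonneg (Real.sin t), abs_nonneg x,
      mul_self_lt_mul_self (abs_nonneg x) h, sq_nonneg x,
      mul_le_mul_of_nonneg_left (Real.sin_sq_le_one t) (sq_nonneg x)]
  have hcont : ∀ x ∈ Metric.ball k ε,
      Continuous (fun t => 1 / Real.sqrt (1 - x^2 * Real.sin t ^ 2)) := by
    intro x hx
    refine continuous_const.div (cont_sqrtu x) (fun t => ?_)
    exact (Real.sqrt_pos.2 (lt_of_lt_of_le hc_pos (hball x hx t))).ne'
  have hkball : k ∈ Metric.ball k ε := Metric.mem_ball_self hε_pos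
  have key := intervalIntegral.hasDerivAt_integral_of_dominated_loc_of_deriv_le
    (F := fun x t => 1 / Real.sqrt (1 - x^2 * Real.sin t ^ 2))
    (F' := fun x t => 2*x*Real.sin t ^ 2 / (2 * Real.sqrt (1 - x^2 * Real.sin t ^ 2) ^ 3))
    (x₀ := k) (a := 0) (b := π/2) (bound := fun _ => 2 / (2 * Real.sqrt c ^ 3))
    (μ := MeasureTheory.volume)
    (Metric.ball_mem_nhds k hε_pos)
    (Filter.eventually_of_mem (Metric.ball_mem_nhds k hε_pos) fun x hx =>
      (hcont x hx).aestronglyMeasurable)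
    (((hcont k hkball)).intervalIntegrable 0 (π/2))
    (by
      refine Continuous.aestronglyMeasurable (Continuous.div (by continuity) ?_ fun t => ?_)
      · exact continuous_const.mul ((cont_sqrtu k).pow 3)
      · have := lt_of_lt_of_le hc_pos (hball k hkball t)
        have := Real.sqrt_pos.2 this
        positivity)
    (Filter.Eventually.of_forall fun t _ x hx => by
      have hu := lt_of_lt_of_le hc_pos (hball x hx t)
      have hsc : Real.sqrt c ≤ Real.sqrt (1 - x^2 * Real.sin t ^ 2) :=
        Real.sqrt_le_sqrt (hball x hx t)
      have hscpos : 0 < Real.sqrt c := Real.sqrt_pos.2 hc_pos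
      simp only [Real.norm_eq_abs]
      rw [abs_div, abs_of_pos (by positivity :
        (0:ℝ) < 2 * Real.sqrt (1 - x^2 * Real.sin t ^ 2) ^ 3)]
      apply div_le_div₀ (by norm_num)
      · rw [abs_mul, abs_mul]
        have h1 : |Real.sin t ^ 2| ≤ 1 := by
          rw [abs_of_nonneg (sq_nonneg _)]; exact Real.sin_sq_le_one t
        have h2 : |x| ≤ 1 := le_of_lt (lt_of_lt_of_le (ball_abs ⟨hk0, hk1⟩ hx) (by linarith))
        calc |2| * |x| * |Real.sin t ^ 2| ≤ 2 * 1 * 1 := by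
              apply mul_le_mul _ h1 (abs_nonneg _) (by norm_num)
              apply mul_le_mul (le_of_eq (abs_of_pos (by norm_num))) h2 (abs_nonneg _)
                (by norm_num)
          _ = 2 := by norm_num
      · positivity
      · have := pow_le_pow_left₀ hscpos.le hsc 3
        linarith)
    (intervalIntegrable_const)
    (Filter.Eventually.of_forall fun t _ x hx =>
      hasDerivAt_invsqrt (lt_of_lt_of_le hc_pos (hball x hx t)))
  exact key.2

lemma ftc_alg (k : ℝ) (hc : (0:ℝ) < 1 - k^2) (s cs q : ℝ) (hq0 : q ≠ 0)
    (hq2 : q^2 = 1 - k^2*s^2) (hcs : cs^2 = 1 - s^2) :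
    1/((1 - k^2*s^2)*q) - q/(1-k^2)
      = -(k^2/(1-k^2)) * (((cs*cs + s*(-s))*q - s*cs*(-(k^2*(2*s*cs))/(2*q)))/q^2) := by
  have h1 : (1 - k^2*s^2) ≠ 0 := by rw [← hq2]; positivity
  field_simp
  linear_combination (-(1-k^2*s^2)*q^2 + (1-k^2 + k^2*(1-k^2*s^2)*(1-2*s^2) - (1-k^2*s^2)^2)) * hq2 + (k^2*(1-k^2*s^2)*(q^2+k^2*s^2)) * hcs

/-- Key FTC identity: `∫ 1/√u³ = E k / (1-k²)`. -/
lemma integral_inv_sqrtu3 {k : ℝ} (hk : k ∈ Ioo (0:ℝ) 1) :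
    (∫ t in (0:ℝ)..(π/2), 1 / Real.sqrt (1 - k^2 * Real.sin t ^ 2) ^ 3)
      = E k / (1 - k^2) := by
  obtain ⟨hk0, hk1⟩ := hk
  have hkabs : |k| < 1 := by rw [abs_of_pos hk0]; exact hk1
  have hc : (0:ℝ) < 1 - k^2 := by nlinarith
  set g : ℝ → ℝ := fun t =>
    1 / Real.sqrt (1 - k^2 * Real.sin t ^ 2) ^ 3
      - Real.sqrt (1 - k^2 * Real.sin t ^ 2) / (1 - k^2) with hg
  set Ψ : ℝ → ℝ := fun t =>
    -(k^2/(1-k^2)) * (Real.sin t * Real.cos t / Real.sqrt (1 - k^2 * Real.sin t ^ 2)) with hΨ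
  have hderiv : ∀ t ∈ uIcc (0:ℝ) (π/2), HasDerivAt Ψ (g t) t := by
    intro t _
    have hu := u_pos hkabs t
    have hne : Real.sqrt (1 - k^2 * Real.sin t ^ 2) ≠ 0 := (Real.sqrt_pos.2 hu).ne'
    have hq : Real.sqrt (1 - k^2 * Real.sin t ^ 2) ^ 2 = 1 - k^2 * Real.sin t ^ 2 :=
      Real.sq_sqrt hu.le
    have hw : HasDerivAt (fun t => 1 - k^2 * Real.sin t ^ 2)
        (-(k^2 * (2 * Real.sin t * Real.cos t))) t := by
      have := (((Real.hasDerivAt_sin t).pow 2).const_mul (k^2)).const_sub 1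
      refine this.congr_deriv ?_; ring
    have hsq := hw.sqrt hu.ne'
    have hnum := (Real.hasDerivAt_sin t).mul (Real.hasDerivAt_cos t)
    have hdiv := hnum.div hsq hne
    have hfull := hdiv.const_mul (-(k^2/(1-k^2)))
    refine hfull.congr_deriv (Eq.symm ?_)
    have h3 : Real.sqrt (1 - k^2 * Real.sin t ^ 2) ^ 3
        = (1 - k^2 * Real.sin t ^ 2) * Real.sqrt (1 - k^2 * Real.sin t ^ 2) := by
      rw [pow_succ, hq]
    have hpy : Real.cos t ^ 2 = 1 - Real.sin t ^ 2 := Real.cos_sq' t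
    simp only [hg, h3]
    exact ftc_alg k hc (Real.sin t) (Real.cos t) _ hne hq hpy
  have hgint : IntervalIntegrable g MeasureTheory.volume 0 (π/2) :=
    ((cont_inv_sqrtu3 hkabs).sub ((cont_sqrtu k).div_const _)).intervalIntegrable 0 (π/2)
  have hint := intervalIntegral.integral_eq_sub_of_hasDerivAt hderiv hgint
  have hΨ0 : Ψ 0 = 0 := by simp [hΨ]
  have hΨπ : Ψ (π/2) = 0 := by simp [hΨ]
  rw [hΨ0, hΨπ, sub_zero] at hint
  have hsplit : (∫ t in (0:ℝ)..(π/2), g t)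
      = (∫ t in (0:ℝ)..(π/2), 1 / Real.sqrt (1 - k^2 * Real.sin t ^ 2) ^ 3)
        - (∫ t in (0:ℝ)..(π/2), Real.sqrt (1 - k^2 * Real.sin t ^ 2)) / (1 - k^2) := by
    rw [← intervalIntegral.integral_div]
    exact intervalIntegral.integral_sub ((cont_inv_sqrtu3 hkabs).intervalIntegrable 0 (π/2))
      (((cont_sqrtu k).div_const _).intervalIntegrable 0 (π/2))
  rw [hsplit] at hint
  rw [E]
  linarith

lemma hasDerivAt_E' {k : ℝ} (hk : k ∈ Ioo (0:ℝ) 1) :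
    HasDerivAt E ((E k - K k)/k) k := by
  obtain ⟨hk0, hk1⟩ := hk
  have hkabs : |k| < 1 := by rw [abs_of_pos hk0]; exact hk1
  have h := hasDerivAt_E_raw ⟨hk0, hk1⟩
  have hval : (∫ t in (0:ℝ)..(π/2),
      -(2*k*Real.sin t ^ 2) / (2 * Real.sqrt (1 - k^2 * Real.sin t ^ 2)))
      = (E k - K k)/k := by
    have h1 : ∀ t ∈ uIcc (0:ℝ) (π/2),
        -(2*k*Real.sin t ^ 2) / (2 * Real.sqrt (1 - k^2 * Real.sin t ^ 2))
          = (Real.sqrt (1 - k^2 * Real.sin t ^ 2)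
              - 1 / Real.sqrt (1 - k^2 * Real.sin t ^ 2))/k := by
      intro t _
      have hu := u_pos hkabs t
      have hq0 : Real.sqrt (1 - k^2 * Real.sin t ^ 2) ≠ 0 := (Real.sqrt_pos.2 hu).ne'
      have hq2 : Real.sqrt (1 - k^2 * Real.sin t ^ 2) ^ 2 = 1 - k^2 * Real.sin t ^ 2 :=
        Real.sq_sqrt hu.le
      have hkne : k ≠ 0 := hk0.ne'
      field_simp
      ring_nf
      linear_combination -hq2
    rw [intervalIntegral.integral_congr h1, intervalIntegral.integral_div,
      intervalIntegral.integral_sub ((cont_sqrtu k).intervalIntegrable 0 (π/2))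
        ((cont_inv_sqrtu hkabs).intervalIntegrable 0 (π/2))]
    rfl
  rw [hval] at h
  exact h

lemma hasDerivAt_K' {k : ℝ} (hk : k ∈ Ioo (0:ℝ) 1) :
    HasDerivAt K ((E k / (1 - k^2) - K k)/k) k := by
  obtain ⟨hk0, hk1⟩ := hk
  have hkabs : |k| < 1 := by rw [abs_of_pos hk0]; exact hk1
  have h := hasDerivAt_K_raw ⟨hk0, hk1⟩
  have hval : (∫ t in (0:ℝ)..(π/2),
      2*k*Real.sin t ^ 2 / (2 * Real.sqrt (1 - k^2 * Real.sin t ^ 2) ^ 3))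
      = (E k / (1 - k^2) - K k)/k := by
    have h1 : ∀ t ∈ uIcc (0:ℝ) (π/2),
        2*k*Real.sin t ^ 2 / (2 * Real.sqrt (1 - k^2 * Real.sin t ^ 2) ^ 3)
          = (1 / Real.sqrt (1 - k^2 * Real.sin t ^ 2) ^ 3
              - 1 / Real.sqrt (1 - k^2 * Real.sin t ^ 2))/k := by
      intro t _
      have hu := u_pos hkabs t
      have hq0 : Real.sqrt (1 - k^2 * Real.sin t ^ 2) ≠ 0 := (Real.sqrt_pos.2 hu).ne'
      have hq2 : Real.sqrt (1 - k^2 * Real.sin t ^ 2) ^ 2 = 1 - k^2 * Real.sin t ^ 2 :=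
        Real.sq_sqrt hu.le
      have hkne : k ≠ 0 := hk0.ne'
      field_simp
      linear_combination hq2
    rw [intervalIntegral.integral_congr h1, intervalIntegral.integral_div,
      intervalIntegral.integral_sub ((cont_inv_sqrtu3 hkabs).intervalIntegrable 0 (π/2))
        ((cont_inv_sqrtu hkabs).intervalIntegrable 0 (π/2)),
      integral_inv_sqrtu3 ⟨hk0, hk1⟩]
    rfl
  rw [hval] at h
  exact h

lemma E_pos {k : ℝ} (hkabs : |k| < 1) : 0 < E k := by
  apply intervalIntegral.intervalIntegral_pos_of_pos_on
    ((cont_sqrtu k).intervalIntegrable 0 (π/2))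
    (fun t _ => Real.sqrt_pos.2 (u_pos hkabs t))
  positivity

lemma K_pos {k : ℝ} (hkabs : |k| < 1) : 0 < K k := by
  apply intervalIntegral.intervalIntegral_pos_of_pos_on
    ((cont_inv_sqrtu hkabs).intervalIntegrable 0 (π/2))
    (fun t _ => by
      have := Real.sqrt_pos.2 (u_pos hkabs t); positivity)
  positivity

lemma E_le_K {k : ℝ} (hkabs : |k| < 1) : E k ≤ K k := by
  apply intervalIntegral.integral_mono_on (by positivity)
    ((cont_sqrtu k).intervalIntegrable 0 (π/2))
    ((cont_inv_sqrtu hkabs).intervalIntegrable 0 (π/2))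
  intro t _
  have hu := u_pos hkabs t
  have h1 : 1 - k^2 * Real.sin t ^ 2 ≤ 1 := by nlinarith [sq_nonneg (k * Real.sin t)]
  have hle : Real.sqrt (1 - k^2 * Real.sin t ^ 2) ≤ 1 := Real.sqrt_le_one.2 h1
  have hpos : 0 < Real.sqrt (1 - k^2 * Real.sin t ^ 2) := Real.sqrt_pos.2 hu
  rw [le_div_iff₀ hpos]
  nlinarith

lemma hasDerivAt_ι₁ {k : ℝ} (hk : k ∈ Ioo (0:ℝ) 1) :
    HasDerivAt ι₁ (((1-2*k^2)*E k - (1-k^2)*K k)/(k*(1-k^2))) k := by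
  obtain ⟨hk0, hk1⟩ := hk
  have hc : (0:ℝ) < 1 - k^2 := by nlinarith
  have h := ((hasDerivAt_E' ⟨hk0, hk1⟩).const_mul 2).sub (hasDerivAt_K' ⟨hk0, hk1⟩)
  have h2 : HasDerivAt (fun x => 2 * E x - K x)
      (((1-2*k^2)*E k - (1-k^2)*K k)/(k*(1-k^2))) k := by
    refine h.congr_deriv (Eq.symm ?_)
    field_simp
    ring
  exact h2

lemma ι₁_pos {k₀ : ℝ} (hk₀ : k₀ ∈ Ioo (0:ℝ) 1) (hroot : 2 * E k₀ - K k₀ = 0)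
    {k : ℝ} (hk : k ∈ Ioo 0 k₀) : 0 < ι₁ k := by
  obtain ⟨hk₀0, hk₀1⟩ := hk₀
  obtain ⟨hk0, hkk₀⟩ := hk
  have hsub : Icc k k₀ ⊆ Ioo (0:ℝ) 1 := fun x hx => ⟨lt_of_lt_of_le hk0 hx.1,
    lt_of_le_of_lt hx.2 hk₀1⟩
  have hanti : StrictAntiOn ι₁ (Icc k k₀) := by
    apply strictAntiOn_of_deriv_neg (convex_Icc k k₀)
    · intro x hx
      exact (hasDerivAt_ι₁ (hsub hx)).differentiableAt.continuousAt.continuousWithinAt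
    · intro x hx
      rw [interior_Icc] at hx
      obtain ⟨hx0, hx1⟩ := hsub (Ioo_subset_Icc_self hx)
      have hxabs : |x| < 1 := by rw [abs_of_pos hx0]; exact hx1
      rw [(hasDerivAt_ι₁ ⟨hx0, hx1⟩).deriv]
      apply div_neg_of_neg_of_pos
      · nlinarith [E_pos hxabs, K_pos hxabs, mul_pos (pow_pos hx0 2) (E_pos hxabs),
          mul_le_mul_of_nonneg_left (E_le_K hxabs) (by nlinarith : (0:ℝ) ≤ 1 - x^2)]
      · nlinarith
  have h := hanti ⟨le_refl k, hkk₀.le⟩ ⟨hkk₀.le, le_refl k₀⟩ hkk₀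
  have h0 : ι₁ k₀ = 0 := hroot
  linarith

set_option maxHeartbeats 1000000 in
lemma final_alg (k Ek Kk R : ℝ) (hk : k ≠ 0) (hc : (1:ℝ) - k^2 ≠ 0) (hR : R ≠ 0)
    (hR2 : R^2 = 2*k*(2*Ek - Kk)) :
    (3 * Ek ^ 2 - (5 - 4 * k ^ 2) * Ek * Kk + 2 * (1 - k ^ 2) * Kk ^ 2) / (1 - k ^ 2) /
      ((2 * k * (2 * Ek - Kk)) ^ 2 * R) =
    (((Ek / (1 - k ^ 2) - Kk) / k - (Ek - Kk) / k +
            (4 * (2 * k ^ 1) * (2 * Ek - Kk) +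
              4 * k ^ 2 * (((1 - 2 * k ^ 2) * Ek - (1 - k ^ 2) * Kk) / (k * (1 - k ^ 2))))) *
          (3 * (2 * k * (2 * Ek - Kk) * R)) -
        (Kk - Ek + 4 * k ^ 2 * (2 * Ek - Kk)) *
          (3 *
            ((2 * 1 * (2 * Ek - Kk) + 2 * k * (((1 - 2 * k ^ 2) * Ek - (1 - k ^ 2) * Kk) / (k * (1 - k ^ 2)))) *
                (3 / 2) *
              R))) /
      (3 * (2 * k * (2 * Ek - Kk) * R)) ^ 2 := by
  have hP : 2*k*(2*Ek - Kk) ≠ 0 := by rw [← hR2]; exact pow_ne_zero 2 hR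
  field_simp
  ring_nf

end Aux

/-- For every `k ∈ (0, k₀)`: (a) `k ↦ √(2ι₁(k)/k)` has derivative
`−E(k)/((1 − k²)·√(2k³ι₁(k)))` at `k`;
(b) `k ↦ (ι₂(k) + 4k²ι₁(k))/(3(2kι₁(k))^{3/2})` has derivative
`ι₃(k)/(2kι₁(k))^{5/2}` at `k`. -/
theorem hasDerivAt_Y12_W12 (k₀ : ℝ) (hk₀ : k₀ ∈ Set.Ioo (0:ℝ) 1)
    (hroot : 2 * E k₀ - K k₀ = 0) :
    ∀ k ∈ Set.Ioo 0 k₀,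
      HasDerivAt (fun x => Real.sqrt (2 * ι₁ x / x))
        (-(E k) / ((1 - k^2) * Real.sqrt (2 * k^3 * ι₁ k))) k ∧
      HasDerivAt (fun x => (ι₂ x + 4 * x^2 * ι₁ x) / (3 * (2 * x * ι₁ x) ^ ((3:ℝ)/2)))
        (ι₃ k / (2 * k * ι₁ k) ^ ((5:ℝ)/2)) k := by
  intro k hk
  obtain ⟨hk0, hkk₀⟩ := hk
  have hk1 : k < 1 := hkk₀.trans hk₀.2
  have hkI : k ∈ Ioo (0:ℝ) 1 := ⟨hk0, hk1⟩
  have hc : (0:ℝ) < 1 - k^2 := by nlinarith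
  have hι₁pos : 0 < ι₁ k := ι₁_pos hk₀ hroot ⟨hk0, hkk₀⟩
  have d1 := hasDerivAt_ι₁ hkI
  have hι₁ne : ι₁ k ≠ 0 := hι₁pos.ne'
  have hkne : k ≠ 0 := hk0.ne'
  set d : ℝ := ((1-2*k^2)*E k - (1-k^2)*K k)/(k*(1-k^2)) with hd
  constructor
  · -- part (a)
    have hq : HasDerivAt (fun x => 2 * ι₁ x / x)
        ((2 * d * k - 2 * ι₁ k * 1) / k^2) k := (d1.const_mul 2).div (hasDerivAt_id k) hkne
    have hpos : 0 < 2 * ι₁ k / k := by positivity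
    have hsq := hq.sqrt hpos.ne'
    convert hsq using 1
    set S : ℝ := Real.sqrt (2 * ι₁ k / k) with hS
    have hSpos : 0 < S := Real.sqrt_pos.2 hpos
    have hS2 : S^2 = 2 * ι₁ k / k := Real.sq_sqrt hpos.le
    have hsqrt_eq : Real.sqrt (2 * k^3 * ι₁ k) = k^2 * S := by
      rw [show 2 * k^3 * ι₁ k = (k^2)^2 * (2 * ι₁ k / k) by field_simp,
        Real.sqrt_mul (sq_nonneg _), Real.sqrt_sq (sq_nonneg k)]
    rw [hsqrt_eq]
    have hkey : d * k - ι₁ k = -(E k)/(1-k^2) := by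
      simp only [hd, ι₁]
      field_simp
      ring
    rw [div_div, show (2 * d * k - 2 * ι₁ k * 1) = 2 * (d * k - ι₁ k) by ring, hkey]
    have hcne : (1:ℝ) - k^2 ≠ 0 := hc.ne'
    have hSne : S ≠ 0 := hSpos.ne'
    field_simp
  · -- part (b)
    have hd2 : HasDerivAt ι₂ ((E k / (1 - k^2) - K k)/k - (E k - K k)/k) k :=
      (hasDerivAt_K' hkI).sub (hasDerivAt_E' hkI)
    have hN : HasDerivAt (fun x => ι₂ x + 4 * x^2 * ι₁ x)
        (((E k / (1 - k^2) - K k)/k - (E k - K k)/k)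
          + ((4 * ((2:ℕ) * k^1)) * ι₁ k + (4 * k^2) * d)) k :=
      hd2.add (((hasDerivAt_pow 2 k).const_mul 4).mul d1)
    have hP : HasDerivAt (fun x => 2 * x * ι₁ x) (2 * 1 * ι₁ k + 2 * k * d) k :=
      ((hasDerivAt_id k).const_mul 2).mul d1
    have hPpos : 0 < 2 * k * ι₁ k := by positivity
    have hrpow := hP.rpow_const (p := (3:ℝ)/2) (Or.inl hPpos.ne')
    have hden := hrpow.const_mul (3:ℝ)
    have hDne : 3 * (2 * k * ι₁ k) ^ ((3:ℝ)/2) ≠ 0 := by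
      have := Real.rpow_pos_of_pos hPpos ((3:ℝ)/2)
      positivity
    have hquot := hN.div hden hDne
    refine hquot.congr_deriv (Eq.symm ?_)
    have hR2 : ((2 * k * ι₁ k) ^ ((1:ℝ)/2))^2 = 2 * k * ι₁ k := by
      rw [← Real.rpow_natCast ((2 * k * ι₁ k) ^ ((1:ℝ)/2)) 2, ← Real.rpow_mul hPpos.le]
      norm_num
    have e1 : (3:ℝ)/2 - 1 = 1/2 := by norm_num
    have h32 : (2 * k * ι₁ k) ^ ((3:ℝ)/2) = (2 * k * ι₁ k) * (2 * k * ι₁ k) ^ ((1:ℝ)/2) := by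
      rw [show (3:ℝ)/2 = 1 + 1/2 by norm_num, Real.rpow_add hPpos, Real.rpow_one]
    have h52 : (2 * k * ι₁ k) ^ ((5:ℝ)/2)
        = (2 * k * ι₁ k)^2 * (2 * k * ι₁ k) ^ ((1:ℝ)/2) := by
      rw [show (5:ℝ)/2 = 2 + 1/2 by norm_num, Real.rpow_add hPpos,
        show ((2:ℝ)) = ((2:ℕ):ℝ) by norm_num, Real.rpow_natCast]
    rw [e1, h32, h52]
    set R : ℝ := (2 * k * ι₁ k) ^ ((1:ℝ)/2) with hR
    have hRpos : 0 < R := Real.rpow_pos_of_pos hPpos _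
    have hRne : R ≠ 0 := hRpos.ne'
    have hcne : (1:ℝ) - k^2 ≠ 0 := hc.ne'
    simp only [ι₁] at hR2
    simp only [ι₁, ι₂, ι₃, hd]
    push_cast
    exact final_alg k (E k) (K k) R hkne hcne hRne hR2
end

section
/- For every k ∈ (k₀, 1) there exists u ∈ (π/2, π) such that sin u · √(1 − k² sin² u) + (F(u,k) − 2E(u,k)) · cos u = 0, where F(u,k) = ∫₀^{u} dt/√(1 − k² sin² t) and E(u,k) = ∫₀^{u} √(1 − k² sin² t) dt are the incomplete elliptic integrals of the first and second kind. -/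
open Real Set Filter Topology

/-- Incomplete elliptic integral of the first kind. -/
noncomputable def F' (u k : ℝ) : ℝ :=
  ∫ t in (0:ℝ)..u, 1 / Real.sqrt (1 - k^2 * Real.sin t ^ 2)

/-- Incomplete elliptic integral of the second kind. -/
noncomputable def E' (u k : ℝ) : ℝ :=
  ∫ t in (0:ℝ)..u, Real.sqrt (1 - k^2 * Real.sin t ^ 2)

/-- For every `k ∈ (k₀, 1)` there exists `u ∈ (π/2, π)` with
`sin u · √(1 − k² sin² u) + (F(u,k) − 2E(u,k)) · cos u = 0`. -/
theorem exists_root_fz (k₀ : ℝ) (hk₀ : k₀ ∈ Set.Ioo (0:ℝ) 1)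
    (hroot : 2 * E k₀ - K k₀ = 0) :
    ∀ k ∈ Set.Ioo k₀ 1, ∃ u ∈ Set.Ioo (π/2) π,
      Real.sin u * Real.sqrt (1 - k^2 * Real.sin u ^ 2) +
        (F' u k - 2 * E' u k) * Real.cos u = 0 := by
  rintro k ⟨hk₀k, hk1⟩
  have hk0 : 0 < k := hk₀.1.trans hk₀k
  -- positivity of the integrand denominator
  have hpos : ∀ t : ℝ, 0 < 1 - k ^ 2 * Real.sin t ^ 2 := by
    intro t
    have h1 : k ^ 2 * Real.sin t ^ 2 ≤ k ^ 2 * 1 := by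
      apply mul_le_mul_of_nonneg_left _ (sq_nonneg k)
      simpa using Real.sin_sq_le_one t
    nlinarith [sq_nonneg k, sq_nonneg (Real.sin t)]
  have hδcont : Continuous fun t : ℝ => 1 - k ^ 2 * Real.sin t ^ 2 := by
    continuity
  have hscont : Continuous fun t : ℝ => Real.sqrt (1 - k ^ 2 * Real.sin t ^ 2) :=
    hδcont.sqrt
  have hicont : Continuous fun t : ℝ => 1 / Real.sqrt (1 - k ^ 2 * Real.sin t ^ 2) := by
    apply Continuous.div continuous_const hscont
    intro t
    exact (Real.sqrt_pos.2 (hpos t)).ne'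
  -- continuity of F' and E' in u
  have hFcont : Continuous fun u => F' u k :=
    intervalIntegral.continuous_primitive (fun a b => hicont.intervalIntegrable a b) 0
  have hEcont : Continuous fun u => E' u k :=
    intervalIntegral.continuous_primitive (fun a b => hscont.intervalIntegrable a b) 0
  set g : ℝ → ℝ := fun u =>
    Real.sin u * Real.sqrt (1 - k ^ 2 * Real.sin u ^ 2) +
      (F' u k - 2 * E' u k) * Real.cos u with hg
  have hgcont : Continuous g := by
    apply Continuous.add
    · exact Real.continuous_sin.mul hscont
    · exact ((hFcont.sub (continuous_const.mul hEcont)).mul Real.continuous_cos)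
  -- symmetry: integral over [π/2, π] equals integral over [0, π/2]
  have hsymm : ∀ f : ℝ → ℝ, (∫ t in (π/2)..π, f (Real.sin t)) = ∫ t in (0:ℝ)..(π/2), f (Real.sin t) := by
    intro f
    have h1 : (∫ t in (π/2)..π, f (Real.sin t)) = ∫ t in (π/2)..π, f (Real.sin (π - t)) := by
      congr 1; ext t; rw [Real.sin_pi_sub]
    rw [h1, intervalIntegral.integral_comp_sub_left (fun t => f (Real.sin t)) π]
    have h2 : π - π / 2 = π / 2 := by ring
    rw [h2, sub_self]
  have hFpi : F' π k = 2 * K k := by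
    have hsplit : F' π k = (∫ t in (0:ℝ)..(π/2), 1 / Real.sqrt (1 - k^2 * Real.sin t ^ 2))
        + ∫ t in (π/2)..π, 1 / Real.sqrt (1 - k^2 * Real.sin t ^ 2) := by
      rw [F', ← intervalIntegral.integral_add_adjacent_intervals
        (hicont.intervalIntegrable 0 (π/2)) (hicont.intervalIntegrable (π/2) π)]
    rw [hsplit, hsymm (fun s => 1 / Real.sqrt (1 - k^2 * s ^ 2)), K]; ring
  have hEpi : E' π k = 2 * E k := by
    have hsplit : E' π k = (∫ t in (0:ℝ)..(π/2), Real.sqrt (1 - k^2 * Real.sin t ^ 2))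
        + ∫ t in (π/2)..π, Real.sqrt (1 - k^2 * Real.sin t ^ 2) := by
      rw [E', ← intervalIntegral.integral_add_adjacent_intervals
        (hscont.intervalIntegrable 0 (π/2)) (hscont.intervalIntegrable (π/2) π)]
    rw [hsplit, hsymm (fun s => Real.sqrt (1 - k^2 * s ^ 2)), E]; ring
  -- monotonicity: 2E(k) - K(k) < 0
  have hpos₀ : ∀ t : ℝ, 0 < 1 - k₀ ^ 2 * Real.sin t ^ 2 := by
    intro t
    have h1 : k₀ ^ 2 * Real.sin t ^ 2 ≤ k₀ ^ 2 * 1 := by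
      apply mul_le_mul_of_nonneg_left _ (sq_nonneg k₀)
      simpa using Real.sin_sq_le_one t
    nlinarith [hk₀.1, hk₀.2]
  have hscont₀ : Continuous fun t : ℝ => Real.sqrt (1 - k₀ ^ 2 * Real.sin t ^ 2) := by
    exact Continuous.sqrt (by continuity)
  have hicont₀ : Continuous fun t : ℝ => 1 / Real.sqrt (1 - k₀ ^ 2 * Real.sin t ^ 2) := by
    apply Continuous.div continuous_const hscont₀
    intro t
    exact (Real.sqrt_pos.2 (hpos₀ t)).ne'
  have hpi2 : (0:ℝ) < π / 2 := by positivity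
  have hsq : k₀ ^ 2 < k ^ 2 := by nlinarith [hk₀.1]
  have hEmono : E k < E k₀ := by
    apply intervalIntegral.integral_lt_integral_of_continuousOn_of_le_of_exists_lt hpi2
      hscont.continuousOn hscont₀.continuousOn
    · intro x _
      apply Real.sqrt_le_sqrt
      nlinarith [sq_nonneg (Real.sin x)]
    · refine ⟨π/2, ⟨le_of_lt hpi2, le_refl _⟩, ?_⟩
      apply Real.sqrt_lt_sqrt (le_of_lt (hpos _))
      rw [Real.sin_pi_div_two]
      nlinarith
  have hKmono : K k₀ < K k := by
    apply intervalIntegral.integral_lt_integral_of_continuousOn_of_le_of_exists_lt hpi2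
      hicont₀.continuousOn hicont.continuousOn
    · intro x _
      apply one_div_le_one_div_of_le (Real.sqrt_pos.2 (hpos x))
      apply Real.sqrt_le_sqrt
      nlinarith [sq_nonneg (Real.sin x)]
    · refine ⟨π/2, ⟨le_of_lt hpi2, le_refl _⟩, ?_⟩
      apply one_div_lt_one_div_of_lt (Real.sqrt_pos.2 (hpos _))
      apply Real.sqrt_lt_sqrt (le_of_lt (hpos _))
      rw [Real.sin_pi_div_two]
      nlinarith
  have hneg : 2 * E k - K k < 0 := by linarith
  -- endpoint values
  have hgpi2 : 0 < g (π/2) := by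
    simp only [hg, Real.sin_pi_div_two, Real.cos_pi_div_two, mul_zero, add_zero, one_mul,
      one_pow, mul_one]
    exact Real.sqrt_pos.2 (by nlinarith)
  have hgpi : g π < 0 := by
    have hval : g π = -(F' π k - 2 * E' π k) := by
      simp only [hg, Real.sin_pi, Real.cos_pi, zero_mul, zero_add, mul_neg_one]
    rw [hval, hFpi, hEpi]
    linarith
  have hle : π/2 ≤ π := by linarith [Real.pi_pos]
  have := intermediate_value_Ioo' hle hgcont.continuousOn (a := π/2) (b := π)
    (f := g) ⟨hgpi, hgpi2⟩
  obtain ⟨u, hu, hgu⟩ := this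
  exact ⟨u, hu, hgu⟩
end
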